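/- Let G be a finite group acting on finite sets S and Λ, let P : S → Λ be a G-equivariant map (P(g·s) = g·P(s)), let p_1, …, p_t be distinct elements of Λ, let π_i = P⁻¹({p_i}) ⊆ S, and let K_i = Stab_G(p_i). Assume: (2) every s ∈ S lies in the same G-orbit as some element of π_1 ∪ … ∪ π_t; and (3) whenever two elements s, s′ ∈ π_1 ∪ … ∪ π_t lie in the same G-orbit, P(s) = P(s′). Let T ⊆ S be a G-invariant subset (g·s ∈ T whenever s ∈ T and g ∈ G). Then |T| = Σ_{i=1}^{t} |π_i ∩ T| · [G : K_i]. -/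

import Mathlib

/-- Counting a `G`-invariant subset `T ⊆ S` (e.g. the solvable
boards): `|T| = Σ_i |π i ∩ T| · [G : K i]`. -/
theorem stmt_1 {G S Λ : Type*} [Group G] [Fintype G] [Fintype S] [Fintype Λ]
    [DecidableEq S] [DecidableEq Λ] [MulAction G S] [MulAction G Λ]
    (P : S → Λ) (hP : ∀ (g : G) (s : S), P (g • s) = g • P s)
    (t : ℕ) (p : Fin t → Λ) (hp : Function.Injective p)
    -- (2) every s ∈ S lies in the same G-orbit as some element of π_1 ∪ … ∪ π_t
    (h2 : ∀ s : S, ∃ (i : Fin t) (s' : S), P s' = p i ∧ ∃ g : G, g • s' = s)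
    -- (3) equivalent elements of π_1 ∪ … ∪ π_t have the same image under P
    (h3 : ∀ s s' : S, (∃ i : Fin t, P s = p i) → (∃ j : Fin t, P s' = p j) →
      (∃ g : G, g • s = s') → P s = P s')
    (T : Finset S) (hT : ∀ s ∈ T, ∀ g : G, g • s ∈ T) :
    T.card =
      ∑ i : Fin t, ((Finset.univ.filter (fun s : S => P s = p i)) ∩ T).card *
        (MulAction.stabilizer G (p i)).index := by
  classical
  -- existence of an index for each s
  have hidx : ∀ s : S, ∃ i : Fin t, ∃ g : G, P (g • s) = p i := by
    intro s
    obtain ⟨i, s', hs', g, hg⟩ := h2 s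
    refine ⟨i, g⁻¹, ?_⟩
    rw [← hg]
    simpa using hs'
  -- uniqueness of the index
  have huniq : ∀ (s : S) (i j : Fin t) (g g' : G),
      P (g • s) = p i → P (g' • s) = p j → i = j := by
    intro s i j g g' hi hj
    have h := h3 (g • s) (g' • s) ⟨i, hi⟩ ⟨j, hj⟩
      ⟨g' * g⁻¹, by rw [mul_smul]; simp⟩
    apply hp
    rw [← hi, ← hj, h]
  set F : S → Fin t := fun s => (hidx s).choose with hF
  have hFspec : ∀ s : S, ∃ g : G, P (g • s) = p (F s) := fun s => (hidx s).choose_spec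
  have hFiff : ∀ (s : S) (i : Fin t), F s = i ↔ ∃ g : G, P (g • s) = p i := by
    intro s i
    constructor
    · rintro rfl; exact hFspec s
    · rintro ⟨g, hg⟩
      obtain ⟨g₀, hg₀⟩ := hFspec s
      exact huniq s (F s) i g₀ g hg₀ hg
  rw [Finset.card_eq_sum_card_fiberwise (f := F) (t := Finset.univ)
    (fun s _ => Finset.mem_univ _)]
  refine Finset.sum_congr rfl ?_
  intro i _
  set K := MulAction.stabilizer G (p i) with hK
  set πT := (Finset.univ.filter (fun s : S => P s = p i)) ∩ T with hπT
  set Ti := T.filter (fun s => F s = i) with hTi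
  -- counting pairs
  set A : Finset (G × S) := Finset.univ ×ˢ πT with hA
  have key : A.card = ∑ x ∈ Ti, (A.filter (fun a => a.1 • a.2 = x)).card := by
    apply Finset.card_eq_sum_card_fiberwise
    rintro ⟨g, s⟩ hgs
    simp only [Finset.mem_coe, hA, Finset.mem_product, hπT, Finset.mem_inter, Finset.mem_filter,
      Finset.mem_univ, true_and] at hgs
    obtain ⟨hPs, hsT⟩ := hgs
    simp only [Finset.mem_coe, hTi, Finset.mem_filter]
    refine ⟨hT s hsT g, ?_⟩
    rw [hFiff]
    exact ⟨g⁻¹, by simpa using hPs⟩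
  have hAcard : A.card = Fintype.card G * πT.card := by
    simp [hA, Finset.card_product]
  -- each fiber has cardinality |K|
  have hfiber : ∀ x ∈ Ti, (A.filter (fun a => a.1 • a.2 = x)).card = Fintype.card K := by
    intro x hx
    simp only [hTi, Finset.mem_filter] at hx
    obtain ⟨hxT, hxF⟩ := hx
    obtain ⟨g₀, hg₀⟩ := (hFiff x i).mp hxF
    have hPx : g₀ • P x = p i := by rw [← hP]; exact hg₀
    rw [← Finset.card_univ (α := K)]
    refine Finset.card_bij'
      (i := fun a ha => (⟨g₀ * a.1, ?_⟩ : K))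
      (j := fun k _ => ((g₀⁻¹ * (k : G)), (g₀⁻¹ * (k : G))⁻¹ • x))
      (fun a ha => Finset.mem_univ _) ?_ ?_ ?_
    · -- g₀ * a.1 stabilizes p i
      obtain ⟨g, s⟩ := a
      simp only [hA, Finset.mem_filter, Finset.mem_product, hπT, Finset.mem_inter,
        Finset.mem_filter, Finset.mem_univ, true_and] at ha
      obtain ⟨⟨hPs, hsT⟩, hgs⟩ := ha
      have hx1 : P x = g • p i := by rw [← hgs, hP, hPs]
      show (g₀ * g) • p i = p i
      rw [mul_smul, ← hx1, hPx]
    · -- backward map lands in the fiber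
      intro k _
      simp only [hA, Finset.mem_filter, Finset.mem_product, hπT, Finset.mem_inter,
        Finset.mem_filter, Finset.mem_univ, true_and]
      refine ⟨⟨?_, ?_⟩, ?_⟩
      · rw [hP]
        have hk : (k : G) • p i = p i := k.2
        have : P x = g₀⁻¹ • p i := by
          rw [← hPx]; simp
        rw [this]
        rw [mul_inv_rev, mul_smul]
        simp only [inv_inv]
        rw [← mul_smul, ← mul_smul]
        have : (k : G)⁻¹ • p i = p i := by
          rw [inv_smul_eq_iff, hk]
        calc ((k : G)⁻¹ * g₀ * g₀⁻¹) • p i = (k : G)⁻¹ • p i := by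
              group
          _ = p i := this
      · exact hT x hxT _
      · have h1 : (g₀⁻¹ * (k : G)) * (g₀⁻¹ * (k : G))⁻¹ = 1 := by group
        rw [smul_smul, h1, one_smul]
    · -- left inverse
      rintro ⟨g, s⟩ ha
      simp only [hA, Finset.mem_filter, Finset.mem_product, hπT, Finset.mem_inter,
        Finset.mem_filter, Finset.mem_univ, true_and] at ha
      obtain ⟨⟨hPs, hsT⟩, hgs⟩ := ha
      simp only [Prod.mk.injEq]
      constructor
      · group
      · have : (g₀⁻¹ * (g₀ * g))⁻¹ = g⁻¹ := by group
        rw [this, ← hgs]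
        simp
    · -- right inverse
      intro k _
      apply Subtype.ext
      simp
  have hsum : ∑ x ∈ Ti, (A.filter (fun a => a.1 • a.2 = x)).card
      = Ti.card * Fintype.card K := by
    rw [Finset.sum_congr rfl hfiber, Finset.sum_const, smul_eq_mul]
  have hGK : Fintype.card G = Fintype.card K * K.index := by
    have := Subgroup.card_mul_index K
    simpa [Nat.card_eq_fintype_card] using this.symm
  have hpos : 0 < Fintype.card K := Fintype.card_pos
  have hmain : Fintype.card K * (Ti.card) = Fintype.card K * (πT.card * K.index) := by
    calc Fintype.card K * Ti.card = Ti.card * Fintype.card K := by ring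
      _ = A.card := by rw [key, hsum]
      _ = Fintype.card G * πT.card := hAcard
      _ = Fintype.card K * (πT.card * K.index) := by rw [hGK]; ring
  exact Nat.eq_of_mul_eq_mul_left hpos hmain
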